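/- arXiv:2303.09362 — 3 statements merged into one kernel-verified Lean document; each statement's English description precedes it below -/
import Mathlib

section
/- Let f : ℝ × [0,∞) → ℝ be locally Lipschitz in its first argument uniformly in time, and let S̄ : [0,∞) → subsets of ℝ be a moving closed convex constraint. If x and x̃ are two absolutely continuous solutions on [0,T] of the perturbed sweeping process ẋ(t) ∈ f(x(t),t) − N_{S̄(t)}(x(t)) with x(t), x̃(t) ∈ S̄(t) for all t, and x(0) = x̃(0), then x(t) = x̃(t) for all t ∈ [0,T]. -/
open MeasureTheory

/-- Normal cone of a set `C ⊆ ℝ` at `x` (empty if `x ∉ C`). -/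
def normalCone1 (C : Set ℝ) (x : ℝ) : Set ℝ :=
  {s : ℝ | x ∈ C ∧ ∀ c ∈ C, s * (c - x) ≤ 0}

/-- `x` is an absolutely continuous solution on `[0,T]` of the perturbed sweeping
process `ẋ(t) ∈ f(x(t),t) − N_{S̄(t)}(x(t))`, `x(t) ∈ S̄(t)`. -/
def IsSweepingSolution (f : ℝ → ℝ → ℝ) (Sbar : ℝ → Set ℝ) (T : ℝ) (x : ℝ → ℝ) : Prop :=
  (∀ t ∈ Set.Icc (0 : ℝ) T, x t ∈ Sbar t) ∧
  ∃ x' : ℝ → ℝ, IntegrableOn x' (Set.Icc (0 : ℝ) T) ∧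
    (∀ t ∈ Set.Icc (0 : ℝ) T, x t = x 0 + ∫ s in (0 : ℝ)..t, x' s) ∧
    (∀ᵐ t ∂(volume.restrict (Set.Icc (0 : ℝ) T)),
      ∃ ν ∈ normalCone1 (Sbar t) (x t), x' t = f (x t) t - ν)

/-- Key local one-sided comparison lemma. -/
lemma sweeping_key
    (f : ℝ → ℝ → ℝ) (Sbar : ℝ → Set ℝ) (T : ℝ)
    (x xt x' xt' : ℝ → ℝ) (L : ℝ) (hL : 0 ≤ L) (t δ : ℝ) (hδ : 0 < δ)
    (ht0 : 0 ≤ t) (htδ : t + δ ≤ T)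
    (hxc : ContinuousOn x (Set.Icc 0 T)) (hxtc : ContinuousOn xt (Set.Icc 0 T))
    (hxi : IntegrableOn x' (Set.Icc (0:ℝ) T)) (hxti : IntegrableOn xt' (Set.Icc (0:ℝ) T))
    (hxint : ∀ u ∈ Set.Icc (0:ℝ) T, x u = x 0 + ∫ s in (0:ℝ)..u, x' s)
    (hxtint : ∀ u ∈ Set.Icc (0:ℝ) T, xt u = xt 0 + ∫ s in (0:ℝ)..u, xt' s)
    (hxm : ∀ u ∈ Set.Icc (0:ℝ) T, x u ∈ Sbar u)
    (hxtm : ∀ u ∈ Set.Icc (0:ℝ) T, xt u ∈ Sbar u)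
    (hae : ∀ᵐ u ∂(volume.restrict (Set.Icc (0:ℝ) T)),
      ∃ ν ∈ normalCone1 (Sbar u) (x u), x' u = f (x u) u - ν)
    (haet : ∀ᵐ u ∂(volume.restrict (Set.Icc (0:ℝ) T)),
      ∃ ν ∈ normalCone1 (Sbar u) (xt u), xt' u = f (xt u) u - ν)
    (hLip : ∀ u ∈ Set.Icc t (t+δ), |f (x u) u - f (xt u) u| ≤ L * |x u - xt u|)
    (heq : x t = xt t) :
    ∀ u ∈ Set.Icc t (t+δ), x u ≤ xt u := by
  by_contra hcon
  push_neg at hcon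
  obtain ⟨t₀, ht₀, hgt⟩ := hcon
  set w : ℝ → ℝ := fun u => x u - xt u with hw
  have hsub : Set.Icc t (t+δ) ⊆ Set.Icc 0 T := Set.Icc_subset_Icc ht0 htδ
  have hwc : ContinuousOn w (Set.Icc 0 T) := hxc.sub hxtc
  have hwt : w t = 0 := by simp [hw, heq]
  have hwt₀ : 0 < w t₀ := sub_pos.mpr hgt
  have htt₀ : t ≤ t₀ := ht₀.1
  have hsub1 : Set.Icc t t₀ ⊆ Set.Icc 0 T :=
    Set.Icc_subset_Icc ht0 (le_trans ht₀.2 htδ)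
  -- the zero set of w on [t, t₀]
  have hZne : (Set.Icc t t₀ ∩ w ⁻¹' {0}).Nonempty := ⟨t, ⟨le_rfl, htt₀⟩, by simpa [hwt]⟩
  have hZc : IsClosed (Set.Icc t t₀ ∩ w ⁻¹' {0}) :=
    (hwc.mono hsub1).preimage_isClosed_of_isClosed isClosed_Icc isClosed_singleton
  have hbdd : BddAbove (Set.Icc t t₀ ∩ w ⁻¹' {0}) :=
    BddAbove.mono Set.inter_subset_left bddAbove_Icc
  set a := sSup (Set.Icc t t₀ ∩ w ⁻¹' {0}) with ha
  have haZ : a ∈ Set.Icc t t₀ ∩ w ⁻¹' {0} := hZc.csSup_mem hZne hbdd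
  obtain ⟨⟨hta, hat₀⟩, hwa'⟩ := haZ
  have hwa : w a = 0 := hwa'
  have hat₀' : a < t₀ := lt_of_le_of_ne hat₀ (fun h => by
    rw [h] at hwa; exact hwt₀.ne' hwa)
  have haT : a ∈ Set.Icc (0:ℝ) T := hsub1 ⟨hta, hat₀⟩
  have ht₀T : t₀ ∈ Set.Icc (0:ℝ) T := hsub1 ⟨htt₀, le_rfl⟩
  have hsub2 : Set.Icc a t₀ ⊆ Set.Icc 0 T := Set.Icc_subset_Icc haT.1 ht₀T.2
  -- w is positive on (a, t₀]
  have hpos : ∀ u ∈ Set.Ioc a t₀, 0 < w u := by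
    intro u hu
    by_contra hle
    push_neg at hle
    have hIVT := intermediate_value_Icc hu.2
      (hwc.mono (Set.Icc_subset_Icc (le_trans haT.1 hu.1.le) ht₀T.2))
    obtain ⟨v, hv, hv0⟩ := hIVT ⟨hle, hwt₀.le⟩
    have hvZ : v ∈ Set.Icc t t₀ ∩ w ⁻¹' {0} :=
      ⟨⟨le_trans hta (le_trans hu.1.le hv.1), hv.2⟩, by simpa using hv0⟩
    exact absurd (le_csSup hbdd hvZ) (not_le.mpr (lt_of_lt_of_le hu.1 hv.1))
  -- a.e. differential inequality on (a, t₀]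
  have haed : ∀ᵐ u ∂(volume.restrict (Set.Icc (0:ℝ) T)),
      u ∈ Set.Ioc a t₀ → x' u - xt' u ≤ L * w u := by
    filter_upwards [hae, haet] with u hu1 hu2 hu
    obtain ⟨ν, hν, hx'⟩ := hu1
    obtain ⟨νt, hνt, hxt'⟩ := hu2
    have huT : u ∈ Set.Icc (0:ℝ) T := hsub2 ⟨hu.1.le, hu.2⟩
    have hupos := hpos u hu
    have h1 : ν * (xt u - x u) ≤ 0 := hν.2 _ (hxtm u huT)
    have h2 : νt * (x u - xt u) ≤ 0 := hνt.2 _ (hxm u huT)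
    have hLb := hLip u ⟨le_trans hta hu.1.le, le_trans hu.2 ht₀.2⟩
    have habs : f (x u) u - f (xt u) u ≤ L * w u := by
      calc f (x u) u - f (xt u) u ≤ |f (x u) u - f (xt u) u| := le_abs_self _
        _ ≤ L * |x u - xt u| := hLb
        _ = L * w u := by rw [abs_of_pos hupos]
    have hwu : 0 < x u - xt u := hupos
    have hν0 : 0 ≤ ν := nonneg_of_mul_nonneg_right (by nlinarith) hwu
    have hνt0 : νt ≤ 0 := nonpos_of_mul_nonpos_right (by rw [mul_comm]; exact h2) hwu
    calc x' u - xt' u = (f (x u) u - f (xt u) u) - (ν - νt) := by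
          rw [hx', hxt']; ring
      _ ≤ f (x u) u - f (xt u) u := by linarith
      _ ≤ L * w u := habs
  -- at this point, the integral comparison
  have hwint : IntervalIntegrable w volume a t₀ := by
    apply ContinuousOn.intervalIntegrable
    rw [Set.uIcc_of_le hat₀'.le]
    exact hwc.mono hsub2
  have key_int : ∀ u ∈ Set.Icc a t₀, w u ≤ L * ∫ s in a..u, w s := by
    intro u hu
    have huT : u ∈ Set.Icc (0:ℝ) T := hsub2 hu
    have hsub3 : Set.Icc a u ⊆ Set.Icc 0 T := Set.Icc_subset_Icc haT.1 huT.2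
    have hsumI : IntegrableOn (fun s => x' s - xt' s) (Set.Icc (0:ℝ) T) volume := hxi.sub hxti
    have hii : IntervalIntegrable (fun s => x' s - xt' s) volume a u := by
      apply MeasureTheory.IntegrableOn.intervalIntegrable
      rw [Set.uIcc_of_le hu.1]
      exact hsumI.mono_set hsub3
    have hIx0u : IntervalIntegrable x' volume 0 u := by
      apply MeasureTheory.IntegrableOn.intervalIntegrable
      rw [Set.uIcc_of_le huT.1]
      exact hxi.mono_set (Set.Icc_subset_Icc le_rfl huT.2)
    have hIx0a : IntervalIntegrable x' volume 0 a := by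
      apply MeasureTheory.IntegrableOn.intervalIntegrable
      rw [Set.uIcc_of_le haT.1]
      exact hxi.mono_set (Set.Icc_subset_Icc le_rfl haT.2)
    have hIxt0u : IntervalIntegrable xt' volume 0 u := by
      apply MeasureTheory.IntegrableOn.intervalIntegrable
      rw [Set.uIcc_of_le huT.1]
      exact hxti.mono_set (Set.Icc_subset_Icc le_rfl huT.2)
    have hIxt0a : IntervalIntegrable xt' volume 0 a := by
      apply MeasureTheory.IntegrableOn.intervalIntegrable
      rw [Set.uIcc_of_le haT.1]
      exact hxti.mono_set (Set.Icc_subset_Icc le_rfl haT.2)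
    have hIxau : IntervalIntegrable x' volume a u := by
      apply MeasureTheory.IntegrableOn.intervalIntegrable
      rw [Set.uIcc_of_le hu.1]
      exact hxi.mono_set hsub3
    have hIxtau : IntervalIntegrable xt' volume a u := by
      apply MeasureTheory.IntegrableOn.intervalIntegrable
      rw [Set.uIcc_of_le hu.1]
      exact hxti.mono_set hsub3
    have e1 : ∫ s in a..u, x' s = x u - x a := by
      have h := intervalIntegral.integral_interval_sub_left hIx0u hIx0a
      rw [← h, hxint u huT, hxint a haT]; ring
    have e2 : ∫ s in a..u, xt' s = xt u - xt a := by
      have h := intervalIntegral.integral_interval_sub_left hIxt0u hIxt0a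
      rw [← h, hxtint u huT, hxtint a haT]; ring
    have hwrep : w u = ∫ s in a..u, (x' s - xt' s) := by
      rw [intervalIntegral.integral_sub hIxau hIxtau, e1, e2]
      have : w a = 0 := hwa
      simp only [hw] at this ⊢
      linarith
    have hLwii : IntervalIntegrable (fun s => L * w s) volume a u := by
      apply ContinuousOn.intervalIntegrable
      rw [Set.uIcc_of_le hu.1]
      exact continuousOn_const.mul (hwc.mono hsub3)
    have hne : ∀ᵐ u' ∂(volume.restrict (Set.Icc a u)), u' ≠ a := by
      rw [ae_iff]
      have h0 : (volume.restrict (Set.Icc a u)) {a} = 0 := by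
        rw [Measure.restrict_apply (measurableSet_singleton a)]
        exact measure_mono_null Set.inter_subset_left (measure_singleton a)
      simpa [not_not] using h0
    have haed' : ∀ᵐ u' ∂(volume.restrict (Set.Icc a u)),
        x' u' - xt' u' ≤ L * w u' := by
      filter_upwards [ae_restrict_of_ae_restrict_of_subset hsub3 haed,
        ae_restrict_mem measurableSet_Icc, hne] with u' hP hmem hne'
      exact hP ⟨lt_of_le_of_ne hmem.1 (Ne.symm hne'), le_trans hmem.2 hu.2⟩
    have hmono := intervalIntegral.integral_mono_ae_restrict hu.1 hii hLwii haed'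
    rw [← hwrep] at hmono
    calc w u ≤ ∫ s in a..u, L * w s := hmono
      _ = L * ∫ s in a..u, w s := intervalIntegral.integral_const_mul L w
  -- Gronwall via monotone auxiliary function
  set I : ℝ → ℝ := fun u => ∫ s in a..u, w s with hI
  set Φ : ℝ → ℝ := fun u => Real.exp (-L * u) * I u with hΦ
  have hIcont : ContinuousOn I (Set.Icc a t₀) := by
    have h := intervalIntegral.continuousOn_primitive_interval
      (f := w) (μ := volume) (a := a) (b := t₀)
      (by rw [Set.uIcc_of_le hat₀'.le]
          exact (hwc.mono hsub2).integrableOn_compact isCompact_Icc)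
    rwa [Set.uIcc_of_le hat₀'.le] at h
  have hΦcont : ContinuousOn Φ (Set.Icc a t₀) :=
    ((Real.continuous_exp.comp (continuous_const.mul continuous_id)).continuousOn).mul hIcont
  have hΦderiv : ∀ u ∈ Set.Ioo a t₀,
      HasDerivAt Φ (Real.exp (-L * u) * (-L) * I u + Real.exp (-L * u) * w u) u := by
    intro u hu
    have hu0T : u ∈ Set.Ioo (0:ℝ) T :=
      ⟨lt_of_le_of_lt haT.1 hu.1, lt_of_lt_of_le hu.2 ht₀T.2⟩
    have hca : ContinuousAt w u :=
      hwc.continuousAt (Icc_mem_nhds hu0T.1 hu0T.2)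
    have hmeas : StronglyMeasurableAtFilter w (nhds u) volume :=
      ContinuousOn.stronglyMeasurableAtFilter isOpen_Ioo
        (hwc.mono Set.Ioo_subset_Icc_self) u hu0T
    have hwiau : IntervalIntegrable w volume a u := by
      apply ContinuousOn.intervalIntegrable
      rw [Set.uIcc_of_le hu.1.le]
      exact hwc.mono (Set.Icc_subset_Icc haT.1 (le_trans hu.2.le ht₀T.2))
    have hId : HasDerivAt I (w u) u :=
      intervalIntegral.integral_hasDerivAt_right hwiau hmeas hca
    have hed : HasDerivAt (fun v => Real.exp (-L * v)) (Real.exp (-L * u) * (-L)) u := by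
      have h1 : HasDerivAt (fun v : ℝ => -L * v) (-L) u := by
        simpa using (hasDerivAt_id u).const_mul (-L)
      exact h1.exp
    exact hed.mul hId
  have hΦanti : AntitoneOn Φ (Set.Icc a t₀) := by
    apply antitoneOn_of_deriv_nonpos (convex_Icc a t₀) hΦcont
    · intro u hu
      rw [interior_Icc] at hu
      exact (hΦderiv u hu).differentiableAt.differentiableWithinAt
    · intro u hu
      rw [interior_Icc] at hu
      rw [(hΦderiv u hu).deriv]
      have hkey := key_int u ⟨hu.1.le, hu.2.le⟩
      have hexp := Real.exp_pos (-L * u)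
      nlinarith [hkey, hexp]
  have hΦa : Φ a = 0 := by simp [hΦ, hI]
  have hΦt₀ : Φ t₀ ≤ 0 := by
    rw [← hΦa]
    exact hΦanti ⟨le_rfl, hat₀'.le⟩ ⟨hat₀'.le, le_rfl⟩ hat₀'.le
  have hIt₀ : I t₀ ≤ 0 := by
    have hexp := Real.exp_pos (-L * t₀)
    have hΦt₀' : Real.exp (-L * t₀) * I t₀ ≤ 0 := hΦt₀
    nlinarith [hΦt₀']
  have hIpos : 0 < I t₀ := by
    apply intervalIntegral.intervalIntegral_pos_of_pos_on hwint _ hat₀'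
    intro s hs
    exact hpos s ⟨hs.1, hs.2.le⟩
  linarith

theorem sweeping_process_uniqueness
    (f : ℝ → ℝ → ℝ) (Sbar : ℝ → Set ℝ) (T : ℝ) (hT : 0 < T)
    -- `f` locally Lipschitz in the state, uniformly in time:
    (hf : ∀ x₀ : ℝ, ∃ s ∈ nhds x₀, ∃ L : NNReal,
      ∀ t ∈ Set.Icc (0 : ℝ) T, LipschitzOnWith L (fun y => f y t) s)
    -- moving closed convex constraint:
    (hS : ∀ t ∈ Set.Icc (0 : ℝ) T, IsClosed (Sbar t) ∧ Convex ℝ (Sbar t))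
    (x xt : ℝ → ℝ)
    (hx : IsSweepingSolution f Sbar T x)
    (hxt : IsSweepingSolution f Sbar T xt)
    (h0 : x 0 = xt 0) :
    ∀ t ∈ Set.Icc (0 : ℝ) T, x t = xt t := by
  obtain ⟨hxm, x', hxi, hxint, hae⟩ := hx
  obtain ⟨hxtm, xt', hxti, hxtint, haet⟩ := hxt
  have hxc : ContinuousOn x (Set.Icc 0 T) := by
    have h1 : ContinuousOn (fun u => x 0 + ∫ s in (0:ℝ)..u, x' s) (Set.Icc 0 T) := by
      apply continuousOn_const.add
      have := intervalIntegral.continuousOn_primitive_interval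
        (f := x') (μ := volume) (a := (0:ℝ)) (b := T)
        (by rwa [Set.uIcc_of_le hT.le])
      rwa [Set.uIcc_of_le hT.le] at this
    exact ContinuousOn.congr h1 hxint
  have hxtc : ContinuousOn xt (Set.Icc 0 T) := by
    have h1 : ContinuousOn (fun u => xt 0 + ∫ s in (0:ℝ)..u, xt' s) (Set.Icc 0 T) := by
      apply continuousOn_const.add
      have := intervalIntegral.continuousOn_primitive_interval
        (f := xt') (μ := volume) (a := (0:ℝ)) (b := T)
        (by rwa [Set.uIcc_of_le hT.le])
      rwa [Set.uIcc_of_le hT.le] at this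
    exact ContinuousOn.congr h1 hxtint
  have main : Set.Icc (0:ℝ) T ⊆ {u | x u = xt u} := by
    apply IsClosed.Icc_subset_of_forall_exists_gt
    · have heqset : {u | x u = xt u} ∩ Set.Icc (0:ℝ) T
          = Set.Icc (0:ℝ) T ∩ (fun u => x u - xt u) ⁻¹' {0} := by
        ext u
        simp only [Set.mem_inter_iff, Set.mem_setOf_eq, Set.mem_preimage,
          Set.mem_singleton_iff, sub_eq_zero]
        tauto
      rw [heqset]
      exact (hxc.sub hxtc).preimage_isClosed_of_isClosed isClosed_Icc isClosed_singleton
    · exact h0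
    · rintro t₁ ⟨heq1, ht₁0, ht₁T⟩ y hy
      obtain ⟨s₀, hs₀, L, hLf⟩ := hf (x t₁)
      obtain ⟨ε, hε, hball⟩ := Metric.mem_nhds_iff.mp hs₀
      have ht₁Icc : t₁ ∈ Set.Icc (0:ℝ) T := ⟨ht₁0, ht₁T.le⟩
      have hcx : ContinuousWithinAt x (Set.Icc 0 T) t₁ := hxc t₁ ht₁Icc
      have hcxt : ContinuousWithinAt xt (Set.Icc 0 T) t₁ := hxtc t₁ ht₁Icc
      have e1 : x ⁻¹' Metric.ball (x t₁) ε ∈ nhdsWithin t₁ (Set.Icc 0 T) :=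
        hcx (Metric.ball_mem_nhds _ hε)
      have e2 : xt ⁻¹' Metric.ball (x t₁) ε ∈ nhdsWithin t₁ (Set.Icc 0 T) := by
        apply hcxt
        rw [heq1] at *
        exact Metric.ball_mem_nhds _ hε
      obtain ⟨δ₁, hδ₁, hδball⟩ := Metric.mem_nhdsWithin_iff.mp (Filter.inter_mem e1 e2)
      set δ := min (δ₁ / 2) (T - t₁) with hδdef
      have hδpos : 0 < δ := lt_min (by linarith) (by linarith)
      have hδT : t₁ + δ ≤ T := by
        have := min_le_right (δ₁ / 2) (T - t₁); simp only [hδdef]; linarith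
      have hmemball : ∀ u ∈ Set.Icc t₁ (t₁ + δ),
          x u ∈ Metric.ball (x t₁) ε ∧ xt u ∈ Metric.ball (x t₁) ε := by
        intro u hu
        have huT : u ∈ Set.Icc (0:ℝ) T := ⟨le_trans ht₁0 hu.1, le_trans hu.2 hδT⟩
        apply hδball
        constructor
        · rw [Metric.mem_ball, Real.dist_eq, abs_of_nonneg (by linarith [hu.1])]
          have h1 : u - t₁ ≤ δ := by linarith [hu.2]
          have h2 : δ ≤ δ₁ / 2 := min_le_left _ _
          linarith
        · exact huT
      have hLip : ∀ u ∈ Set.Icc t₁ (t₁ + δ),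
          |f (x u) u - f (xt u) u| ≤ (L : ℝ) * |x u - xt u| := by
        intro u hu
        have huT : u ∈ Set.Icc (0:ℝ) T := ⟨le_trans ht₁0 hu.1, le_trans hu.2 hδT⟩
        obtain ⟨hb1, hb2⟩ := hmemball u hu
        have := (hLf u huT).dist_le_mul (x u) (hball hb1) (xt u) (hball hb2)
        simpa [Real.dist_eq] using this
      have hle1 := sweeping_key f Sbar T x xt x' xt' (L : ℝ) L.2 t₁ δ hδpos ht₁0 hδT
        hxc hxtc hxi hxti hxint hxtint hxm hxtm hae haet hLip heq1
      have hle2 := sweeping_key f Sbar T xt x xt' x' (L : ℝ) L.2 t₁ δ hδpos ht₁0 hδT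
        hxtc hxc hxti hxi hxtint hxint hxtm hxm haet hae
        (fun u hu => by rw [abs_sub_comm (f (xt u) u), abs_sub_comm (xt u)]; exact hLip u hu)
        heq1.symm
      refine ⟨min (t₁ + δ) y, ?_, lt_min (by linarith) hy, min_le_right _ _⟩
      have hm : min (t₁ + δ) y ∈ Set.Icc t₁ (t₁ + δ) :=
        ⟨le_min (by linarith) hy.le, min_le_left _ _⟩
      exact le_antisymm (hle1 _ hm) (hle2 _ hm)
  exact fun τ hτ => main hτ
end

section
/- Let T₁, …, T_N be closed convex cones in ℝⁿ each containing a fixed closed convex cone T (i.e., T ⊆ T_j for all j), let E ⊆ ℝⁿ be a subspace with T + E = ℝⁿ, and let v ∈ ℝⁿ. Denote by P_j = P_{T_j,E}(v) the unique minimizer of ‖w − v‖ over {w ∈ T_j : w − v ∈ E}, and P = P_{T,E}(v) the corresponding minimizer for T. If u is a convex combination u = Σ λ_j P_j (λ_j ≥ 0, Σ λ_j = 1) with u ∈ T, then u = P. -/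
theorem convex_combination_of_oblique_projections {n N : ℕ}
    (T : Set (EuclideanSpace ℝ (Fin n))) (Tj : Fin N → Set (EuclideanSpace ℝ (Fin n)))
    (hTclosed : IsClosed T) (hTconv : Convex ℝ T)
    (hTcone : ∀ c : ℝ, 0 ≤ c → ∀ w ∈ T, c • w ∈ T)
    (hTjclosed : ∀ j, IsClosed (Tj j)) (hTjconv : ∀ j, Convex ℝ (Tj j))
    (hTjcone : ∀ j, ∀ c : ℝ, 0 ≤ c → ∀ w ∈ Tj j, c • w ∈ Tj j)
    (hsub : ∀ j, T ⊆ Tj j)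
    (E : Submodule ℝ (EuclideanSpace ℝ (Fin n)))
    (hTE : ∀ y : EuclideanSpace ℝ (Fin n), ∃ w ∈ T, ∃ e ∈ E, y = w + e)
    (v : EuclideanSpace ℝ (Fin n))
    (P : EuclideanSpace ℝ (Fin n)) (Pj : Fin N → EuclideanSpace ℝ (Fin n))
    -- each `Pj j` is the minimizer of `‖w - v‖` over `{w ∈ Tj j : w - v ∈ E}`
    (hPj : ∀ j, Pj j ∈ Tj j ∧ Pj j - v ∈ E ∧
      ∀ w ∈ Tj j, w - v ∈ E → ‖Pj j - v‖ ≤ ‖w - v‖)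
    -- `P` is the minimizer for `T`, and it is unique
    (hP : P ∈ T ∧ P - v ∈ E ∧ ∀ w ∈ T, w - v ∈ E → ‖P - v‖ ≤ ‖w - v‖)
    (hPuniq : ∀ w ∈ T, w - v ∈ E → ‖w - v‖ = ‖P - v‖ → w = P)
    (lam : Fin N → ℝ) (hlam : ∀ j, 0 ≤ lam j) (hsum : ∑ j, lam j = 1)
    (u : EuclideanSpace ℝ (Fin n)) (hu : u = ∑ j, lam j • Pj j) (huT : u ∈ T) :
    u = P := by
  have huv : u - v = ∑ j, lam j • (Pj j - v) := by
    simp only [smul_sub, Finset.sum_sub_distrib, ← Finset.sum_smul, hsum, one_smul, hu]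
  have hE : u - v ∈ E := by
    rw [huv]
    exact Submodule.sum_mem E fun j _ => Submodule.smul_mem E _ (hPj j).2.1
  have hle : ∀ j, ‖Pj j - v‖ ≤ ‖P - v‖ := fun j =>
    (hPj j).2.2 P (hsub j hP.1) hP.2.1
  have h1 : ‖u - v‖ ≤ ‖P - v‖ := by
    rw [huv]
    calc ‖∑ j, lam j • (Pj j - v)‖ ≤ ∑ j, ‖lam j • (Pj j - v)‖ := norm_sum_le _ _
      _ ≤ ∑ j, lam j * ‖P - v‖ := by
          refine Finset.sum_le_sum fun j _ => ?_
          rw [norm_smul, Real.norm_eq_abs, abs_of_nonneg (hlam j)]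
          exact mul_le_mul_of_nonneg_left (hle j) (hlam j)
      _ = ‖P - v‖ := by rw [← Finset.sum_mul, hsum, one_mul]
  have h2 : ‖P - v‖ ≤ ‖u - v‖ := hP.2.2 u huT hE
  exact hPuniq u huT hE (le_antisymm h1 h2)
end

section
/- Let K ⊆ ℝⁿ be a closed convex cone, E ⊆ ℝⁿ a subspace with E ∩ (K ∪ −K) = {0} and (K ∪ −K) + E = ℝⁿ, and set S = K ∪ (−K). Then for every x ∈ ℝⁿ, the set C_x = S ∩ (x + E) is nonempty, closed, and convex; in fact C_x equals either K ∩ (x + E) or (−K) ∩ (x + E). -/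
theorem slice_of_sector_convex {n : ℕ}
    (K : Set (EuclideanSpace ℝ (Fin n))) (hKclosed : IsClosed K) (hKconv : Convex ℝ K)
    (hKcone : ∀ c : ℝ, 0 ≤ c → ∀ w ∈ K, c • w ∈ K)
    (E : Submodule ℝ (EuclideanSpace ℝ (Fin n)))
    (hEK : (E : Set (EuclideanSpace ℝ (Fin n))) ∩ (K ∪ -K) = {0})
    (hsurj : ∀ y : EuclideanSpace ℝ (Fin n), ∃ s ∈ K ∪ -K, ∃ e ∈ E, y = s + e)
    (x : EuclideanSpace ℝ (Fin n)) :
    ((K ∪ -K) ∩ {y | y - x ∈ E}).Nonempty ∧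
    IsClosed ((K ∪ -K) ∩ {y | y - x ∈ E}) ∧
    Convex ℝ ((K ∪ -K) ∩ {y | y - x ∈ E}) ∧
    ((K ∪ -K) ∩ {y | y - x ∈ E} = K ∩ {y | y - x ∈ E} ∨
      (K ∪ -K) ∩ {y | y - x ∈ E} = (-K) ∩ {y | y - x ∈ E}) := by
  set A : Set (EuclideanSpace ℝ (Fin n)) := {y | y - x ∈ E} with hA
  -- K is closed under addition
  have hadd : ∀ a ∈ K, ∀ b ∈ K, a + b ∈ K := by
    intro a ha b hb
    have h1 := hKconv ha hb (by norm_num : (0:ℝ) ≤ 1/2) (by norm_num : (0:ℝ) ≤ 1/2)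
      (by norm_num : (1:ℝ)/2 + 1/2 = 1)
    have h2 := hKcone 2 (by norm_num) _ h1
    have h3 : (2:ℝ) • ((1/2 : ℝ) • a + (1/2 : ℝ) • b) = a + b := by
      rw [smul_add, smul_smul, smul_smul]; norm_num
    rwa [h3] at h2
  -- key : points of K ∩ A and (-K) ∩ A coincide
  have key : ∀ s ∈ K, s ∈ A → ∀ t, t ∈ (-K : Set (EuclideanSpace ℝ (Fin n))) → t ∈ A →
      s = t := by
    intro s hs hsA t ht htA
    have hnt : -t ∈ K := by simpa using ht
    have h1 : s - t ∈ K := by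
      have := hadd s hs _ hnt
      rwa [← sub_eq_add_neg] at this
    have h2 : s - t ∈ E := by
      have := E.sub_mem hsA htA
      simpa using this
    have h3 : s - t ∈ ({0} : Set (EuclideanSpace ℝ (Fin n))) := by
      rw [← hEK]; exact ⟨h2, Or.inl h1⟩
    exact sub_eq_zero.mp h3
  -- A is convex
  have hAconv : Convex ℝ A := by
    intro y hy z hz a b ha hb hab
    show a • y + b • z - x ∈ E
    have heq : a • y + b • z - x = a • (y - x) + b • (z - x) + (a + b - 1) • x := by
      module
    rw [heq, hab]
    simpa using E.add_mem (E.add_mem (E.smul_mem a hy) (E.smul_mem b hz)) (E.smul_mem 0 E.zero_mem)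
  -- the dichotomy
  have hdich : (K ∪ -K) ∩ A = K ∩ A ∨ (K ∪ -K) ∩ A = (-K) ∩ A := by
    by_cases hne : (K ∩ A).Nonempty
    · left
      obtain ⟨s, hsK, hsA⟩ := hne
      ext y
      constructor
      · rintro ⟨hy | hy, hyA⟩
        · exact ⟨hy, hyA⟩
        · have := key s hsK hsA y hy hyA
          exact ⟨this ▸ hsK, hyA⟩
      · rintro ⟨h1, h2⟩; exact ⟨Or.inl h1, h2⟩
    · right
      ext y
      constructor
      · rintro ⟨hy | hy, hyA⟩
        · exact absurd ⟨y, hy, hyA⟩ hne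
        · exact ⟨hy, hyA⟩
      · rintro ⟨h1, h2⟩; exact ⟨Or.inr h1, h2⟩
  refine ⟨?_, ?_, ?_, hdich⟩
  · obtain ⟨s, hs, e, he, hx⟩ := hsurj x
    refine ⟨s, hs, ?_⟩
    show s - x ∈ E
    have : s - x = -e := by rw [hx]; abel
    rw [this]
    exact E.neg_mem he
  · have hAclosed : IsClosed A := by
      have hE : IsClosed (E : Set (EuclideanSpace ℝ (Fin n))) :=
        Submodule.closed_of_finiteDimensional E
      have : A = (fun y => y - x) ⁻¹' (E : Set (EuclideanSpace ℝ (Fin n))) := rfl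
      rw [this]
      exact hE.preimage (continuous_id.sub continuous_const)
    exact (hKclosed.union hKclosed.neg).inter hAclosed
  · rcases hdich with h | h
    · rw [h]; exact hKconv.inter hAconv
    · rw [h]; exact hKconv.neg.inter hAconv
end
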